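/- The symbol of the standard second-difference operator combined with the c-correction, Q̂₁(ω) = ( -4 + 2c(cos(2θ)+3) + Δ )/(2(h/2)²) with θ = (h/2)ω, has the Taylor expansion Q̂₁(ω) = -ω² + ((1+4c)/(12-24c)) ω⁴ (h/2)² + O(h⁴) as h → 0 for fixed ω, provided c ≠ 1/2. -/

import Mathlib

open Real Asymptotics Filter

open Complex Finset in
theorem cos_bound6' {x : ℝ} (hx : |x| ≤ 1) :
    |Real.cos x - (1 - x ^ 2 / 2 + x ^ 4 / 24)| ≤ |x| ^ 6 :=
  calc
    |Real.cos x - (1 - x ^ 2 / 2 + x ^ 4 / 24)|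
        = ‖(Complex.cos x - (1 - (x : ℂ) ^ 2 / 2 + (x : ℂ) ^ 4 / 24))‖ := by
      rw [← Real.norm_eq_abs, ← Complex.norm_real]; push_cast; simp
    _ = ‖((Complex.exp (x * I) + Complex.exp (-x * I)
          - (2 - (x : ℂ) ^ 2 + (x : ℂ) ^ 4 / 12)) / 2)‖ := by
      rw [Complex.cos.eq_1]; ring_nf
    _ = ‖(((Complex.exp (x * I) - ∑ m ∈ range 6, (x * I) ^ m / m.factorial) +
          (Complex.exp (-x * I) - ∑ m ∈ range 6, (-x * I) ^ m / m.factorial)) / 2)‖ := by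
      congr 2
      have : ∑ m ∈ range 6, ((x : ℂ) * I) ^ m / m.factorial +
          ∑ m ∈ range 6, (-(x : ℂ) * I) ^ m / m.factorial = 2 - (x:ℂ)^2 + (x:ℂ)^4/12 := by
        simp [sum_range_succ, Nat.factorial]
        ring_nf
        simp [I_sq]
        ring
      rw [← this]; ring
    _ ≤ ‖((Complex.exp (x * I) - ∑ m ∈ range 6, (x * I) ^ m / m.factorial) / 2)‖ +
          ‖((Complex.exp (-x * I) - ∑ m ∈ range 6, (-x * I) ^ m / m.factorial) / 2)‖ := by
      rw [add_div]; exact norm_add_le _ _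
    _ = ‖(Complex.exp (x * I) - ∑ m ∈ range 6, (x * I) ^ m / m.factorial)‖ / 2 +
          ‖(Complex.exp (-x * I) - ∑ m ∈ range 6, (-x * I) ^ m / m.factorial)‖ / 2 := by
      simp [norm_div]
    _ ≤ ‖((x:ℂ) * I)‖ ^ 6 * ((Nat.succ 6) * ((Nat.factorial 6 * (6:ℕ) : ℕ) : ℝ)⁻¹) / 2 +
          ‖(-(x:ℂ) * I)‖ ^ 6 * ((Nat.succ 6) * ((Nat.factorial 6 * (6:ℕ) : ℕ) : ℝ)⁻¹) / 2 := by
      gcongr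
      · exact (Complex.exp_bound (by simpa) (by norm_num)).trans (by norm_num [Nat.factorial])
      · exact (Complex.exp_bound (by simpa) (by norm_num)).trans (by norm_num [Nat.factorial])
    _ ≤ |x| ^ 6 := by
      norm_num [Nat.factorial]
      nlinarith [abs_nonneg x, pow_nonneg (abs_nonneg x) 6]

set_option maxHeartbeats 1000000 in
/-- Taylor expansion of the symbol `Q̂₁`: with `θ = ωh/2` and `|c| < 1/2`,
`Q̂₁(ω) = -ω² + ((1+4c)/(12-24c)) ω⁴ (h/2)² + O(h⁴)` as `h → 0`. -/
theorem stmt_6 (c ω : ℝ) (hc : |c| < 1 / 2) :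
    (fun h : ℝ =>
        (-4 + 2 * c * (Real.cos (2 * (ω * h / 2)) + 3) +
            Real.sqrt (2 * c ^ 2 * Real.cos (4 * (ω * h / 2)) + 38 * c ^ 2 +
              8 * (c - 1) * (3 * c - 1) * Real.cos (2 * (ω * h / 2)) - 32 * c + 8)) /
          (2 * (h / 2) ^ 2) -
        (-ω ^ 2 + (1 + 4 * c) / (12 - 24 * c) * ω ^ 4 * (h / 2) ^ 2))
      =O[nhdsWithin 0 (Set.Ioi 0)] fun h : ℝ => h ^ 4 := by
  obtain ⟨hc1, hc2⟩ := abs_lt.1 hc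
  have h12 : (0:ℝ) < 1 - 2*c := by linarith
  set a : ℝ := 4 - 8*c with ha_def
  have ha : 0 < a := by rw [ha_def]; linarith
  set β : ℝ := (4*c - 1)/(8*(1 - 2*c)) with hβ_def
  set l := nhdsWithin (0:ℝ) (Set.Ioi 0) with hl
  set y : ℝ → ℝ := fun h => 1 - Real.cos (ω*h) with hy_def
  set Sf : ℝ → ℝ := fun h => 2 * c ^ 2 * Real.cos (4 * (ω * h / 2)) + 38 * c ^ 2 +
      8 * (c - 1) * (3 * c - 1) * Real.cos (2 * (ω * h / 2)) - 32 * c + 8 with hSf_def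
  set Pf : ℝ → ℝ := fun h => a - a/4 * y h + β * (y h)^2 with hPf_def
  set Gf : ℝ → ℝ := fun h => (-ω ^ 2 + (1 + 4 * c) / (12 - 24 * c) * ω ^ 4 * (h / 2) ^ 2)
      * (2 * (h / 2) ^ 2) with hGf_def
  set T2f : ℝ → ℝ := fun h => -(y h) + β * (y h)^2 - Gf h with hT2f_def
  clear_value a β l y Sf Pf Gf T2f
  -- basic facts about y
  have hy0 : ∀ h, 0 ≤ y h := fun h => by
    simp only [hy_def, sub_nonneg]; exact Real.cos_le_one _
  have hyT : ∀ h, y h ≤ ω^2*h^2/2 := fun h => by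
    have h1 := Real.sin_sq_le_sq (x := ω*h/2)
    have h2 := Real.sin_sq_eq_half_sub (ω*h/2)
    have h3 : 2 * (ω*h/2) = ω*h := by ring
    rw [h3] at h2
    simp only [hy_def]
    nlinarith
  -- rewrite of Sf
  have hSy : ∀ h, Sf h = a^2 - a^2/2 * y h + 4*c^2 * (y h)^2 := fun h => by
    have e1 : Real.cos (4*(ω*h/2)) = 2 * Real.cos (ω*h)^2 - 1 := by
      rw [show 4*(ω*h/2) = 2*(ω*h) by ring, Real.cos_two_mul]
    have e2 : Real.cos (2*(ω*h/2)) = Real.cos (ω*h) := by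
      rw [show 2*(ω*h/2) = ω*h by ring]
    simp only [hSf_def, e1, e2, hy_def, ha_def]
    ring
  -- algebraic relations
  have hrel : a^2/16 + 2*a*β = 4*c^2 := by
    rw [ha_def, hβ_def]; field_simp [(by linarith : (0:ℝ) < 1 - c*2).ne']; ring
  have h24 : (12 - 24*c) ≠ 0 := by intro hx; nlinarith
  have h8 : (8*(1 - 2*c)) ≠ 0 := by intro hx; nlinarith
  have hκ : (1 + 4*c)/(12 - 24*c) = 8*(1/24 + β/4) := by
    rw [hβ_def]; field_simp [(by linarith : (0:ℝ) < 1 - c*2).ne', (by linarith : (0:ℝ) < 12 - c*24).ne']; ring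
  have hSP : ∀ h, Sf h - (Pf h)^2 = (y h)^3 * (a*β/2 - β^2 * y h) := fun h => by
    rw [hSy h, hPf_def]
    linear_combination (-(y h)^2) * hrel
  -- eventual smallness
  set ε : ℝ := min (1/2) (a/(4*(|β|+1))) with hε_def
  clear_value ε
  have hεpos : 0 < ε := by
    rw [hε_def]
    apply lt_min (by norm_num)
    positivity
  have htend : Tendsto (fun h : ℝ => ω^2*h^2/2) l (nhds 0) := by
    rw [hl]
    have hcont : Continuous fun h : ℝ => ω^2*h^2/2 := by continuity
    have := (hcont.tendsto 0).mono_left (nhdsWithin_le_nhds (a := (0:ℝ)) (s := Set.Ioi 0))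
    simpa using this
  have hev2 : ∀ᶠ h in l, ω^2*h^2/2 < ε := htend.eventually (gt_mem_nhds hεpos)
  have htend2 : Tendsto (fun h : ℝ => |h|) l (nhds 0) := by
    rw [hl]
    have := (continuous_abs.tendsto (0:ℝ)).mono_left (nhdsWithin_le_nhds (s := Set.Ioi 0))
    simpa using this
  have hev3 : ∀ᶠ h in l, |h| ≤ 1 := htend2.eventually
    (eventually_le_nhds (by norm_num))
  have hmem : Set.Ioi (0:ℝ) ∈ l := by rw [hl]; exact self_mem_nhdsWithin
  have hε1 : ε ≤ 1/2 := by rw [hε_def]; exact min_le_left _ _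
  have hε2 : ε ≤ a/(4*(|β|+1)) := by rw [hε_def]; exact min_le_right _ _
  -- T1 big-O
  have bigT1 : (fun h => Real.sqrt (Sf h) - Pf h) =O[l] fun h => h^6 := by
    rw [Asymptotics.isBigO_iff]
    refine ⟨(ω^6/8 * (|a*β/2| + β^2)) / (a/2), ?_⟩
    filter_upwards [hev2] with h h2
    have hyε : y h ≤ a/(4*(|β|+1)) := ((hyT h).trans h2.le).trans hε2
    have hy1 : y h ≤ 1 := by
      have := ((hyT h).trans h2.le).trans hε1; linarith
    have hy0h := hy0 h
    have hS0 : a^2/2 ≤ Sf h := by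
      rw [hSy h]
      nlinarith [sq_nonneg a, mul_nonneg (sq_nonneg c) (sq_nonneg (y h))]
    have hSnn : 0 ≤ Sf h := le_trans (by positivity) hS0
    have hPge : a/2 ≤ Pf h := by
      have hβ1 : |β| * (y h)^2 ≤ |β| * y h := by
        apply mul_le_mul_of_nonneg_left _ (abs_nonneg β)
        nlinarith
      have hβ2 : |β| * y h ≤ |β| * (a/(4*(|β|+1))) :=
        mul_le_mul_of_nonneg_left hyε (abs_nonneg β)
      have hne : (|β| + 1) ≠ 0 := by positivity
      have hβ3 : |β| * (a/(4*(|β|+1))) ≤ a/4 := by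
        have e : |β| * (a/(4*(|β|+1))) = |β| * a / (4*(|β|+1)) := by ring
        rw [e, div_le_iff₀ (by positivity)]
        nlinarith [mul_nonneg ha.le (abs_nonneg β)]
      have hβy : -(a/4) ≤ β * (y h)^2 := by
        have := neg_abs_le (β * (y h)^2)
        rw [abs_mul, abs_of_nonneg (sq_nonneg (y h))] at this
        linarith
      simp only [hPf_def]
      nlinarith
    have hsnn := Real.sqrt_nonneg (Sf h)
    have hden : a/2 ≤ Real.sqrt (Sf h) + Pf h := by linarith
    have hdenpos : 0 < Real.sqrt (Sf h) + Pf h := lt_of_lt_of_le (by positivity) hden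
    have hsq := Real.sq_sqrt hSnn
    have heq : Real.sqrt (Sf h) - Pf h = (Sf h - (Pf h)^2) / (Real.sqrt (Sf h) + Pf h) := by
      rw [eq_div_iff (ne_of_gt hdenpos)]
      linear_combination hsq
    rw [Real.norm_eq_abs, Real.norm_eq_abs, heq, abs_div, abs_of_pos hdenpos]
    have hnum : |Sf h - (Pf h)^2| ≤ ω^6*h^6/8 * (|a*β/2| + β^2) := by
      rw [hSP h, abs_mul]
      have h1 : |(y h)^3| = (y h)^3 := abs_of_nonneg (by positivity)
      have h2 : |a*β/2 - β^2*y h| ≤ |a*β/2| + β^2 := by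
        refine (abs_sub _ _).trans ?_
        have : |β^2 * y h| ≤ β^2 := by
          rw [abs_mul, abs_of_nonneg (sq_nonneg β), abs_of_nonneg hy0h]
          nlinarith [sq_nonneg β]
        linarith
      calc |(y h)^3| * |a*β/2 - β^2*y h| ≤ (y h)^3 * (|a*β/2| + β^2) := by
            rw [h1]
            exact mul_le_mul_of_nonneg_left h2 (by positivity)
        _ ≤ (ω^2*h^2/2)^3 * (|a*β/2| + β^2) := by
            have : (y h)^3 ≤ (ω^2*h^2/2)^3 := by
              exact pow_le_pow_left₀ hy0h (hyT h) 3
            exact mul_le_mul_of_nonneg_right this (by positivity)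
        _ = ω^6*h^6/8 * (|a*β/2| + β^2) := by ring
    calc |Sf h - (Pf h)^2| / (Real.sqrt (Sf h) + Pf h)
        ≤ (ω^6*h^6/8 * (|a*β/2| + β^2)) / (a/2) :=
          div_le_div₀ (by positivity) hnum (by positivity) hden
      _ = (ω^6/8 * (|a*β/2| + β^2)) / (a/2) * |h^6| := by
          rw [abs_of_nonneg (by positivity : (0:ℝ) ≤ h^6)]; ring
  -- T2 big-O
  have bigT2 : T2f =O[l] fun h => h^6 := by
    rw [Asymptotics.isBigO_iff]
    refine ⟨ω^6 + |β| * (ω^6 + ω^4/24) * ω^2, ?_⟩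
    filter_upwards [hev2, hev3] with h h2 h3
    have hy0h := hy0 h
    have hyTh := hyT h
    have hω1 : |ω*h| ≤ 1 := by
      rw [← sq_le_one_iff_abs_le_one]
      nlinarith
    have hE := cos_bound6' hω1
    have hE6 : |Real.cos (ω*h) - (1 - (ω*h)^2/2 + (ω*h)^4/24)| ≤ ω^6 * h^6 := by
      refine hE.trans (le_of_eq ?_)
      rw [← abs_pow, abs_of_nonneg (by positivity : (0:ℝ) ≤ (ω*h)^6)]
      ring
    have hdec : T2f h = (Real.cos (ω*h) - (1 - (ω*h)^2/2 + (ω*h)^4/24))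
        + β*(y h - ω^2*h^2/2)*(y h + ω^2*h^2/2) := by
      simp only [hT2f_def, hGf_def, hy_def]
      linear_combination (-(ω^4*h^4/8)) * hκ
    have hymT : |y h - ω^2*h^2/2| ≤ ω^6*h^6 + ω^4*h^4/24 := by
      have he : y h - ω^2*h^2/2 =
          -(Real.cos (ω*h) - (1 - (ω*h)^2/2 + (ω*h)^4/24)) - ω^4*h^4/24 := by
        simp only [hy_def]; ring
      rw [he]
      refine (abs_sub _ _).trans ?_
      rw [abs_neg]
      exact add_le_add hE6 (le_of_eq (abs_of_nonneg (by positivity)))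
    have hypT : |y h + ω^2*h^2/2| ≤ ω^2*h^2 := by
      rw [abs_of_nonneg (by positivity)]
      linarith
    rw [Real.norm_eq_abs, Real.norm_eq_abs, hdec]
    have hh2 : h^2 ≤ 1 := (sq_le_one_iff_abs_le_one h).mpr h3
    have h8le : h^8 ≤ h^6 := by nlinarith [pow_nonneg (sq_nonneg h) 3]
    calc |(Real.cos (ω*h) - (1 - (ω*h)^2/2 + (ω*h)^4/24))
          + β*(y h - ω^2*h^2/2)*(y h + ω^2*h^2/2)|
        ≤ |Real.cos (ω*h) - (1 - (ω*h)^2/2 + (ω*h)^4/24)|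
          + |β| * |y h - ω^2*h^2/2| * |y h + ω^2*h^2/2| := by
          refine (abs_add_le _ _).trans ?_
          rw [abs_mul, abs_mul]
      _ ≤ ω^6*h^6 + |β| * (ω^6*h^6 + ω^4*h^4/24) * (ω^2*h^2) := by
          refine add_le_add hE6 ?_
          have hb0 := abs_nonneg β
          have := mul_le_mul (mul_le_mul_of_nonneg_left hymT hb0) hypT (abs_nonneg _)
            (by positivity)
          exact this
      _ ≤ (ω^6 + |β| * (ω^6 + ω^4/24) * ω^2) * |h^6| := by
          rw [abs_of_nonneg (by positivity : (0:ℝ) ≤ h^6)]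
          nlinarith [mul_le_mul_of_nonneg_left h8le
            (by positivity : (0:ℝ) ≤ |β| * ω^8)]
  -- assemble
  have key := bigT1.add bigT2
  have keymul : (fun h => ((Real.sqrt (Sf h) - Pf h) + T2f h) * (2/h^2)) =O[l]
      fun h => h^4 := by
    have step := key.mul (Asymptotics.isBigO_refl (fun h : ℝ => 2/h^2) l)
    refine step.trans ?_
    rw [Asymptotics.isBigO_iff]
    refine ⟨2, ?_⟩
    filter_upwards [hmem] with h hh
    have hh0 : (0:ℝ) < h := hh
    have he : h^6 * (2/h^2) = 2 * h^4 := by field_simp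
    rw [Real.norm_eq_abs, Real.norm_eq_abs, he,
      abs_of_nonneg (by positivity : (0:ℝ) ≤ 2*h^4),
      abs_of_nonneg (by positivity : (0:ℝ) ≤ h^4)]
  refine keymul.congr' ?_ Filter.EventuallyEq.rfl
  filter_upwards [hmem] with h hh
  have hh0 : (h:ℝ) ≠ 0 := ne_of_gt hh
  simp only [hT2f_def, hPf_def, hGf_def, hSf_def, hy_def]
  rw [show (2:ℝ)*(ω*h/2) = ω*h by ring, ha_def]
  field_simp
  ring
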